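/- For all x ≥ 1, √(2π)·x·exp(x²/2) ≥ 1 + exp(x); equivalently, 1 − exp(x)/(1+exp(x)) ≥ φ(x)/x where φ is the standard Gaussian density; combined with the Gaussian tail bound 1 − Φ(x) ≤ φ(x)/x this yields exp(x)/(1+exp(x)) ≤ Φ(x) for x ≥ 1. -/

import Mathlib

open MeasureTheory

noncomputable def stdGaussianPDF (x : ℝ) : ℝ :=
  Real.exp (-x ^ 2 / 2) / Real.sqrt (2 * Real.pi)

noncomputable def stdGaussianCDF (x : ℝ) : ℝ :=
  (Real.sqrt (2 * Real.pi))⁻¹ * ∫ t in Set.Iic x, Real.exp (-t ^ 2 / 2)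

lemma key_ineq (x : ℝ) (hx : 1 ≤ x) :
    Real.sqrt (2 * Real.pi) * x * Real.exp (x ^ 2 / 2) ≥ 1 + Real.exp x := by
  have hsq : (1.5 : ℝ) * Real.exp (1/2) ≤ Real.sqrt (2 * Real.pi) := by
    rw [show Real.sqrt (2 * Real.pi) = Real.sqrt (2 * Real.pi) from rfl]
    have h1 : ((1.5 : ℝ) * Real.exp (1/2)) ^ 2 ≤ 2 * Real.pi := by
      have he : Real.exp (1/2) * Real.exp (1/2) = Real.exp 1 := by
        rw [← Real.exp_add]; norm_num
      have he1 : Real.exp 1 < 2.7182818286 := Real.exp_one_lt_d9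
      have hpi : (3.141592 : ℝ) < Real.pi := Real.pi_gt_d6
      nlinarith
    have := Real.sqrt_le_sqrt h1
    rwa [Real.sqrt_sq (by positivity)] at this
  have h2 : Real.exp (x - 1/2) ≤ Real.exp (x ^ 2 / 2) :=
    Real.exp_le_exp.mpr (by nlinarith [sq_nonneg (x - 1)])
  have hex : Real.exp 1 ≤ Real.exp x := Real.exp_le_exp.mpr hx
  have he2 : (2 : ℝ) ≤ Real.exp 1 := by
    have := Real.exp_one_gt_d9; linarith
  have hsplit : Real.exp (1/2) * Real.exp (x - 1/2) = Real.exp x := by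
    rw [← Real.exp_add]; ring_nf
  have hpos : 0 < Real.exp (x - 1/2) := Real.exp_pos _
  have hpos2 : 0 < Real.exp (1/2) := Real.exp_pos _
  have step : (1.5 : ℝ) * Real.exp x ≤ Real.sqrt (2 * Real.pi) * x * Real.exp (x ^ 2 / 2) := by
    calc (1.5 : ℝ) * Real.exp x = 1.5 * Real.exp (1/2) * Real.exp (x - 1/2) := by
          rw [mul_assoc, hsplit]
      _ ≤ Real.sqrt (2 * Real.pi) * Real.exp (x - 1/2) := by
          apply mul_le_mul_of_nonneg_right hsq hpos.le
      _ ≤ Real.sqrt (2 * Real.pi) * x * Real.exp (x ^ 2 / 2) := by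
          have hs : (0 : ℝ) ≤ Real.sqrt (2 * Real.pi) := Real.sqrt_nonneg _
          have hmid : Real.exp (x - 1/2) ≤ x * Real.exp (x ^ 2 / 2) := by
            nlinarith [Real.exp_pos (x ^ 2 / 2)]
          calc Real.sqrt (2 * Real.pi) * Real.exp (x - 1/2)
              ≤ Real.sqrt (2 * Real.pi) * (x * Real.exp (x ^ 2 / 2)) :=
                mul_le_mul_of_nonneg_left hmid hs
            _ = Real.sqrt (2 * Real.pi) * x * Real.exp (x ^ 2 / 2) := by ring
  have hx2 : (2 : ℝ) ≤ Real.exp x := le_trans he2 hex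
  linarith

theorem logistic_le_gaussianCDF_tail
    (htail : ∀ x : ℝ, 1 ≤ x → 1 - stdGaussianCDF x ≤ stdGaussianPDF x / x) :
    (∀ x : ℝ, 1 ≤ x →
        Real.sqrt (2 * Real.pi) * x * Real.exp (x ^ 2 / 2) ≥ 1 + Real.exp x) ∧
    (∀ x : ℝ, 1 ≤ x →
        1 - Real.exp x / (1 + Real.exp x) ≥ stdGaussianPDF x / x) ∧
    (∀ x : ℝ, 1 ≤ x →
        Real.exp x / (1 + Real.exp x) ≤ stdGaussianCDF x) := by
  have part2 : ∀ x : ℝ, 1 ≤ x →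
      1 - Real.exp x / (1 + Real.exp x) ≥ stdGaussianPDF x / x := by
    intro x hx
    have hkey := key_ineq x hx
    have hxpos : (0 : ℝ) < x := by linarith
    have hep : (0 : ℝ) < 1 + Real.exp x := by positivity
    have hsp : (0 : ℝ) < Real.sqrt (2 * Real.pi) := Real.sqrt_pos.mpr (by positivity)
    have hrw : (1 : ℝ) - Real.exp x / (1 + Real.exp x) = 1 / (1 + Real.exp x) := by
      field_simp
      ring
    rw [hrw, ge_iff_le, stdGaussianPDF, div_div, div_le_div_iff₀ (by positivity) hep]
    have hee : Real.exp (-x ^ 2 / 2) * Real.exp (x ^ 2 / 2) = 1 := by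
      rw [← Real.exp_add]; ring_nf; exact Real.exp_zero
    have hEpos : (0 : ℝ) < Real.exp (x ^ 2 / 2) := Real.exp_pos _
    nlinarith [Real.exp_pos (-x ^ 2 / 2)]
  refine ⟨fun x hx => key_ineq x hx, part2, fun x hx => ?_⟩
  have h1 := htail x hx
  have h2 := part2 x hx
  linarith
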